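/- Let m ≥ 1, β_i > 0, γ_i > 0 for i = 1,…,m, and let 0 < N^{(1)} < N^{(2)} be two budgets. Let N*(N^{(1)}) and N*(N^{(2)}) be the optimal allocations (minimizers of f(N) = ∑_{i=1}^m β_i · N_i^{-γ_i} on S(N^{(1)}) and S(N^{(2)}) respectively). Then the optimal allocation is strictly increasing in the budget in every coordinate: N_i*(N^{(1)}) < N_i*(N^{(2)}) for every index i. -/
import Mathlib
open Finset Real

lemma lagrange_cond (m : ℕ) (β γ : Fin m → ℝ) (hβ : ∀ i, 0 < β i) (hγ : ∀ i, 0 < γ i)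
    (N : ℝ) (x : Fin m → ℝ) (hx_pos : ∀ i, 0 < x i) (hx_sum : ∑ i, x i = N)
    (hx_min : ∀ z : Fin m → ℝ, (∀ i, 0 < z i) → ∑ i, z i = N →
      ∑ i, β i * x i ^ (-γ i) ≤ ∑ i, β i * z i ^ (-γ i))
    (i j : Fin m) :
    β i * γ i * x i ^ (-γ i - 1) = β j * γ j * x j ^ (-γ j - 1) := by
  rcases eq_or_ne i j with rfl | hij
  · rfl
  set φ : ℝ → ℝ := fun t => β i * (x i + t) ^ (-γ i) + β j * (x j - t) ^ (-γ j) with hφ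
  -- the perturbed vector
  set z : ℝ → Fin m → ℝ := fun t k => if k = i then x i + t else if k = j then x j - t else x k
    with hz
  have hδ : (0:ℝ) < min (x i) (x j) := lt_min (hx_pos i) (hx_pos j)
  have hsum_split : ∀ t, ∑ k, β k * (z t k) ^ (-γ k)
      = φ t + ∑ k ∈ (univ.erase i).erase j, β k * (x k) ^ (-γ k) := by
    intro t
    have hj : j ∈ univ.erase i := by simp [hij.symm]
    rw [← Finset.add_sum_erase _ _ (mem_univ i), ← Finset.add_sum_erase _ _ hj]
    have h1 : z t i = x i + t := by simp [hz]
    have h2 : z t j = x j - t := by simp [hz, hij.symm]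
    have h3 : ∀ k ∈ (univ.erase i).erase j, β k * (z t k) ^ (-γ k) = β k * (x k) ^ (-γ k) := by
      intro k hk
      simp only [mem_erase] at hk
      simp [hz, hk.1, hk.2.1]
    rw [Finset.sum_congr rfl h3, h1, h2, hφ]
    ring
  have hmin : IsLocalMin φ 0 := by
    filter_upwards [Ioo_mem_nhds (neg_lt_zero.2 hδ) hδ] with t ht
    obtain ⟨ht1, ht2⟩ := ht
    have hti : -(x i) < t := lt_of_le_of_lt (neg_le_neg (min_le_left (x i) (x j))) ht1
    have htj : t < x j := lt_of_lt_of_le ht2 (min_le_right (x i) (x j))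
    have hzpos : ∀ k, 0 < z t k := by
      intro k
      show (0:ℝ) < if k = i then x i + t else if k = j then x j - t else x k
      by_cases h1 : k = i
      · rw [if_pos h1]; linarith
      by_cases h2 : k = j
      · rw [if_neg h1, if_pos h2]; linarith
      · rw [if_neg h1, if_neg h2]; exact hx_pos k
    have hzsum : ∑ k, z t k = N := by
      have : ∀ k, z t k = x k + (if k = i then t else 0) + (if k = j then -t else 0) := by
        intro k
        show (if k = i then x i + t else if k = j then x j - t else x k)
            = x k + (if k = i then t else 0) + (if k = j then -t else 0)
        by_cases h1 : k = i
        · rw [if_pos h1, if_pos h1, if_neg (h1 ▸ hij : k ≠ j), h1]; ring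
        by_cases h2 : k = j
        · rw [if_neg h1, if_pos h2, if_neg h1, if_pos h2, h2]; ring
        · rw [if_neg h1, if_neg h2, if_neg h1, if_neg h2]; ring
      simp only [this, Finset.sum_add_distrib, Finset.sum_ite_eq' univ, mem_univ, if_pos,
        hx_sum]
      ring
    have := hx_min (z t) hzpos hzsum
    rw [hsum_split t] at this
    have hz0 : z 0 = x := by
      funext k
      show (if k = i then x i + 0 else if k = j then x j - 0 else x k) = x k
      by_cases h1 : k = i
      · rw [if_pos h1, h1]; ring
      by_cases h2 : k = j
      · rw [if_neg h1, if_pos h2, h2]; ring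
      · rw [if_neg h1, if_neg h2]
    have h0 : ∑ k, β k * (x k) ^ (-γ k) = φ 0 + ∑ k ∈ (univ.erase i).erase j,
        β k * (x k) ^ (-γ k) := by
      have h := hsum_split 0
      rwa [hz0] at h
    rw [h0] at this
    simpa using this
  -- derivative of φ at 0
  have hd1 : HasDerivAt (fun t : ℝ => (x i + t) ^ (-γ i))
      (-γ i * (x i + 0) ^ (-γ i - 1) * 1) 0 := by
    have hinner : HasDerivAt (fun t : ℝ => x i + t) 1 0 := (hasDerivAt_id 0).const_add (x i)
    exact (Real.hasDerivAt_rpow_const (p := -γ i)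
      (Or.inl (by simpa using (hx_pos i).ne'))).comp 0 hinner
  have hd2 : HasDerivAt (fun t : ℝ => (x j - t) ^ (-γ j))
      (-γ j * (x j - 0) ^ (-γ j - 1) * (-1)) 0 := by
    have hinner : HasDerivAt (fun t : ℝ => x j - t) (-1) 0 := (hasDerivAt_id 0).const_sub (x j)
    exact (Real.hasDerivAt_rpow_const (p := -γ j)
      (Or.inl (by simpa using (hx_pos j).ne'))).comp 0 hinner
  have hdφ : HasDerivAt φ
      (β i * (-γ i * (x i + 0) ^ (-γ i - 1) * 1) + β j * (-γ j * (x j - 0) ^ (-γ j - 1) * (-1)))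
      0 := (hd1.const_mul (β i)).add (hd2.const_mul (β j))
  have hzero := hmin.deriv_eq_zero
  rw [hdφ.deriv] at hzero
  simp only [add_zero, sub_zero, mul_one, mul_neg_one] at hzero
  nlinarith [hzero]

/-- The optimal allocation is strictly increasing in the budget in every
coordinate. -/
theorem optimal_allocation_strictMono (m : ℕ) (hm : 1 ≤ m)
    (β γ : Fin m → ℝ) (hβ : ∀ i, 0 < β i) (hγ : ∀ i, 0 < γ i)
    (N₁ N₂ : ℝ) (hN₁ : 0 < N₁) (hlt : N₁ < N₂)
    (x : Fin m → ℝ) (hx_pos : ∀ i, 0 < x i) (hx_sum : ∑ i, x i = N₁)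
    (hx_min : ∀ z : Fin m → ℝ, (∀ i, 0 < z i) → ∑ i, z i = N₁ →
      ∑ i, β i * x i ^ (-γ i) ≤ ∑ i, β i * z i ^ (-γ i))
    (y : Fin m → ℝ) (hy_pos : ∀ i, 0 < y i) (hy_sum : ∑ i, y i = N₂)
    (hy_min : ∀ z : Fin m → ℝ, (∀ i, 0 < z i) → ∑ i, z i = N₂ →
      ∑ i, β i * y i ^ (-γ i) ≤ ∑ i, β i * z i ^ (-γ i)) :
    ∀ i, x i < y i := by
  intro i
  have hsumlt : ∑ k, x k < ∑ k, y k := by rw [hx_sum, hy_sum]; exact hlt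
  obtain ⟨k, -, hk⟩ := Finset.exists_lt_of_sum_lt hsumlt
  have h1 := lagrange_cond m β γ hβ hγ N₁ x hx_pos hx_sum hx_min i k
  have h2 := lagrange_cond m β γ hβ hγ N₂ y hy_pos hy_sum hy_min i k
  have hkexp : y k ^ (-γ k - 1) < x k ^ (-γ k - 1) :=
    Real.rpow_lt_rpow_of_neg (hx_pos k) hk (by linarith [hγ k])
  have hbk : 0 < β k * γ k := mul_pos (hβ k) (hγ k)
  have hmul : β k * γ k * y k ^ (-γ k - 1) < β k * γ k * x k ^ (-γ k - 1) :=
    (mul_lt_mul_iff_right₀ hbk).2 hkexp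
  rw [← h1, ← h2] at hmul
  have hbi : 0 < β i * γ i := mul_pos (hβ i) (hγ i)
  have hiexp : y i ^ (-γ i - 1) < x i ^ (-γ i - 1) := by
    have := (mul_lt_mul_iff_right₀ hbi).1 (by linarith [hmul] : β i * γ i * y i ^ (-γ i - 1) < β i * γ i * x i ^ (-γ i - 1))
    exact this
  by_contra hcon
  push_neg at hcon
  have : x i ^ (-γ i - 1) ≤ y i ^ (-γ i - 1) :=
    Real.rpow_le_rpow_of_nonpos (hy_pos i) hcon (by linarith [hγ i])
  linarith
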